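/- Let N be an n-bit binary counter, let R be a valid configuration of N, and let u ∈ L_reset = ι_sync ((ι_{=0} | ι_dec) ι_rotr ι_off)* (ι_{=0} | ι_dec) ι_rotr ι_sync be such that |R·u| = |R|. Then under the configuration R·u the counter is synchronized (i.e., d₀ ∈ R·u) and its value is zero. -/

import Mathlib

/-- Partial transformations on `Q` (partial functions `Q → Q`), with
left-to-right composition: `q·(fg) = (q·f)·g`. -/
def PTrans (Q : Type*) : Type _ := Q → Option Q

/-- The image `R·f` of a configuration `R` under a partial transformation `f`. -/
def pApply {Q : Type*} (R : Set Q) (f : PTrans Q) : Set Q :=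
  {q' | ∃ q ∈ R, f q = some q'}

/-- The image `R·u` of a configuration under a word of partial transformations. -/
def wordApply {Q : Type*} (R : Set Q) (u : List (PTrans Q)) : Set Q :=
  u.foldl pApply R

/-! ### The `n`-bit binary counter
Cells: `(0, i) = dᵢ` (tape `S`), `(1, i) = cᵢ` (tape `T`), `(2, i) = c̄ᵢ`
(tape `T̄`). -/

variable (n : ℕ) [NeZero n]

/-- The cell `dᵢ` of the tape `S`. -/
def dCell (i : Fin n) : Fin 3 × Fin n := (0, i)

/-- The cell `cᵢ` of the tape `T`. -/
def cCell (i : Fin n) : Fin 3 × Fin n := (1, i)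

/-- The cell `c̄ᵢ` of the tape `T̄`. -/
def cbarCell (i : Fin n) : Fin 3 × Fin n := (2, i)

/-- `ι_rotl` : cyclic left rotation on all three tapes. -/
def rotl : PTrans (Fin 3 × Fin n) := fun x => some (x.1, x.2 + 1)

/-- `ι_rotr` : cyclic right rotation on all three tapes. -/
def rotr : PTrans (Fin 3 × Fin n) := fun x => some (x.1, x.2 - 1)

/-- `ι_{=0}` : undefined on `c₀`, identity on all other cells. -/
def eqz : PTrans (Fin 3 × Fin n) := fun x => if x = cCell n 0 then none else some x

/-- `ι_{=1}` : undefined on `c̄₀`, identity on all other cells. -/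
def eqo : PTrans (Fin 3 × Fin n) := fun x => if x = cbarCell n 0 then none else some x

/-- `ι_sync` : undefined on `d₁, …, d_{n-1}`, identity on all other cells. -/
def syncI : PTrans (Fin 3 × Fin n) :=
  fun x => if x.1 = 0 ∧ x.2 ≠ 0 then none else some x

/-- `ι_off` : undefined on `d₀`, identity on all other cells. -/
def offI : PTrans (Fin 3 × Fin n) := fun x => if x = dCell n 0 then none else some x

/-- `ι_inc` : maps `c̄₀` to `c₀`, undefined on `c₀`, identity elsewhere. -/
def incI : PTrans (Fin 3 × Fin n) :=
  fun x => if x = cbarCell n 0 then some (cCell n 0)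
    else if x = cCell n 0 then none else some x

/-- `ι_dec` : maps `c₀` to `c̄₀`, undefined on `c̄₀`, identity elsewhere. -/
def decI : PTrans (Fin 3 × Fin n) :=
  fun x => if x = cCell n 0 then some (cbarCell n 0)
    else if x = cbarCell n 0 then none else some x

/-- The instruction set of the `n`-bit binary counter. -/
def counterI : Set (PTrans (Fin 3 × Fin n)) :=
  {rotl n, rotr n, eqz n, eqo n, syncI n, offI n, incI n, decI n}

/-- A configuration is valid if it contains exactly one cell of the tape `S` and,
for each `i`, exactly one of `cᵢ`, `c̄ᵢ`. -/
def ValidConf (R : Set (Fin 3 × Fin n)) : Prop :=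
  (∃! i : Fin n, dCell n i ∈ R) ∧ ∀ i : Fin n, (cCell n i ∈ R ↔ cbarCell n i ∉ R)

open Classical in
/-- The value of the counter under a configuration `R`: `Σ_{i : cᵢ ∈ R} 2^i`. -/
noncomputable def counterValue (R : Set (Fin 3 × Fin n)) : ℕ :=
  ∑ i : Fin n, if cCell n i ∈ R then 2 ^ (i : ℕ) else 0

/-- Membership in the regular language
`L_reset = ι_sync ((ι_{=0} | ι_dec) ι_rotr ι_off)* (ι_{=0} | ι_dec) ι_rotr ι_sync`. -/
def memLreset (u : List (PTrans (Fin 3 × Fin n))) : Prop :=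
  ∃ (bs : List (PTrans (Fin 3 × Fin n))) (b : PTrans (Fin 3 × Fin n)),
    (∀ x ∈ bs, x = eqz n ∨ x = decI n) ∧ (b = eqz n ∨ b = decI n) ∧
    u = syncI n ::
      ((bs.map fun x => [x, rotr n, offI n]).flatten ++ [b, rotr n, syncI n])

/-- Membership in the regular language
`L_inc = ι_sync (ι_dec ι_rotr ι_off)* ι_inc (ι_off ι_rotr)* ι_sync`. -/
def memLinc (u : List (PTrans (Fin 3 × Fin n))) : Prop :=
  ∃ k m : ℕ,
    u = syncI n ::
      ((List.replicate k [decI n, rotr n, offI n]).flatten ++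
        incI n :: ((List.replicate m [offI n, rotr n]).flatten ++ [syncI n]))

/-- Membership in the regular language
`L_dec = ι_sync (ι_inc ι_rotr ι_off)* ι_dec (ι_off ι_rotr)* ι_sync`. -/
def memLdec (u : List (PTrans (Fin 3 × Fin n))) : Prop :=
  ∃ k m : ℕ,
    u = syncI n ::
      ((List.replicate k [incI n, rotr n, offI n]).flatten ++
        decI n :: ((List.replicate m [offI n, rotr n]).flatten ++ [syncI n]))


open Fin.NatCast Fin.CommRing

/-! ### Auxiliary machinery -/

/-- A partial transformation is partial-injective. -/
def PInj {Q : Type*} (f : PTrans Q) : Prop :=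
  ∀ a b c, f a = some c → f b = some c → a = b

lemma pApply_eq_image {Q : Type*} {R : Set Q} {f : PTrans Q} (σ : Q → Q)
    (htot : ∀ q ∈ R, f q = some (σ q)) : pApply R f = σ '' R := by
  ext q'
  constructor
  · rintro ⟨q, hq, hfq⟩
    refine ⟨q, hq, ?_⟩
    rw [htot q hq] at hfq
    exact Option.some.inj hfq
  · rintro ⟨q, hq, rfl⟩
    exact ⟨q, hq, htot q hq⟩

lemma pApply_id {Q : Type*} {R : Set Q} {f : PTrans Q}
    (htot : ∀ q ∈ R, f q = some q) : pApply R f = R := by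
  rw [pApply_eq_image id htot, Set.image_id]

lemma pApply_card {Q : Type*} [Finite Q] [Inhabited Q] {R : Set Q} {f : PTrans Q}
    (hf : PInj f) :
    (pApply R f).ncard ≤ R.ncard ∧
    ((pApply R f).ncard = R.ncard → ∀ q ∈ R, (f q).isSome) := by
  classical
  set D : Set Q := {q ∈ R | (f q).isSome} with hD
  set g : Q → Q := fun q => (f q).getD default with hg
  have himg : pApply R f = g '' D := by
    ext q'
    constructor
    · rintro ⟨q, hq, hfq⟩
      exact ⟨q, ⟨hq, by rw [hfq]; rfl⟩, by simp [hg, hfq]⟩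
    · rintro ⟨q, ⟨hq, hs⟩, rfl⟩
      obtain ⟨c, hc⟩ := Option.isSome_iff_exists.mp hs
      exact ⟨q, hq, by simp [hg, hc]⟩
  have hinj : Set.InjOn g D := by
    rintro a ⟨_, ha⟩ b ⟨_, hb⟩ hab
    obtain ⟨ca, hca⟩ := Option.isSome_iff_exists.mp ha
    obtain ⟨cb, hcb⟩ := Option.isSome_iff_exists.mp hb
    simp only [hg, hca, hcb, Option.getD_some] at hab
    exact hf a b cb (by rw [hca, hab]) hcb
  have hDR : D ⊆ R := fun q hq => hq.1
  have h1 : (pApply R f).ncard = D.ncard := by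
    rw [himg, Set.ncard_image_of_injOn hinj]
  constructor
  · rw [h1]; exact Set.ncard_le_ncard hDR R.toFinite
  · intro he q hq
    rw [h1] at he
    have hDReq : D = R := Set.eq_of_subset_of_ncard_le hDR he.ge R.toFinite
    have : q ∈ D := hDReq ▸ hq
    exact this.2

lemma wordApply_nil {Q : Type*} (R : Set Q) : wordApply R [] = R := rfl

lemma wordApply_cons {Q : Type*} (R : Set Q) (a : PTrans Q) (u : List (PTrans Q)) :
    wordApply R (a :: u) = wordApply (pApply R a) u := rfl

lemma ncard_wordApply_le {Q : Type*} [Finite Q] [Inhabited Q]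
    {u : List (PTrans Q)} (hu : ∀ f ∈ u, PInj f) (R : Set Q) :
    (wordApply R u).ncard ≤ R.ncard := by
  induction u generalizing R with
  | nil => exact le_refl _
  | cons a v ih =>
    rw [wordApply_cons]
    exact le_trans (ih (fun f hf => hu f (List.mem_cons_of_mem a hf)) _)
      (pApply_card (hu a (List.mem_cons_self))).1

lemma peel {Q : Type*} [Finite Q] [Inhabited Q]
    {u : List (PTrans Q)} {a : PTrans Q} {R : Set Q}
    (hu : ∀ f ∈ u, PInj f) (ha : PInj a)
    (hcard : (wordApply R (a :: u)).ncard = R.ncard) :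
    (∀ q ∈ R, (a q).isSome) ∧
      (wordApply (pApply R a) u).ncard = (pApply R a).ncard := by
  have h1 : (wordApply (pApply R a) u).ncard ≤ (pApply R a).ncard :=
    ncard_wordApply_le hu _
  have h2 : (pApply R a).ncard ≤ R.ncard := (pApply_card ha).1
  rw [wordApply_cons] at hcard
  have e2 : (pApply R a).ncard = R.ncard := le_antisymm h2 (hcard ▸ h1)
  exact ⟨(pApply_card ha).2 e2, le_antisymm h1 (by rw [e2, hcard])⟩

set_option linter.unusedSectionVars false

/-- Canonical form of a valid configuration: `d` at position `p`,
bit `i` set iff `h i`. -/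
def confOf (p : Fin n) (h : Fin n → Prop) : Set (Fin 3 × Fin n) :=
  {x | (x.1 = 0 ∧ x.2 = p) ∨ (x.1 = 1 ∧ h x.2) ∨ (x.1 = 2 ∧ ¬ h x.2)}

lemma fin3_cases (a : Fin 3) : a = 0 ∨ a = 1 ∨ a = 2 := by revert a; decide

lemma mem_confOf {p : Fin n} {h : Fin n → Prop} {a : Fin 3} {i : Fin n} :
    (a, i) ∈ confOf n p h ↔
      (a = 0 ∧ i = p) ∨ (a = 1 ∧ h i) ∨ (a = 2 ∧ ¬ h i) := Iff.rfl

lemma d_mem_confOf {p : Fin n} {h : Fin n → Prop} {i : Fin n} :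
    dCell n i ∈ confOf n p h ↔ i = p := by
  unfold dCell; rw [mem_confOf]; simp

lemma c_mem_confOf {p : Fin n} {h : Fin n → Prop} {i : Fin n} :
    cCell n i ∈ confOf n p h ↔ h i := by
  unfold cCell; rw [mem_confOf]; simp

lemma cbar_mem_confOf {p : Fin n} {h : Fin n → Prop} {i : Fin n} :
    cbarCell n i ∈ confOf n p h ↔ ¬ h i := by
  unfold cbarCell; rw [mem_confOf]; simp

lemma confOf_congr {p : Fin n} {h h' : Fin n → Prop} (e : ∀ i, h i ↔ h' i) :
    confOf n p h = confOf n p h' := by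
  ext ⟨a, i⟩
  rw [mem_confOf, mem_confOf, e i]

lemma valid_eq_confOf {R : Set (Fin 3 × Fin n)} (hR : ValidConf n R) :
    ∃ p : Fin n, R = confOf n p (fun i => cCell n i ∈ R) := by
  obtain ⟨⟨p, hp, hpu⟩, hc⟩ := hR
  refine ⟨p, ?_⟩
  ext ⟨a, i⟩
  rw [mem_confOf]
  rcases fin3_cases a with rfl | rfl | rfl
  · simp only [true_and]
    simp only [show ((0:Fin 3) = 1) = False by simp, show ((0:Fin 3) = 2) = False by simp,
      false_and, or_false]
    constructor
    · intro hmem; exact hpu i hmem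
    · rintro rfl; exact hp
  · simp only [show ((1:Fin 3) = 0) = False by simp, show ((1:Fin 3) = 2) = False by simp,
      false_and, or_false, false_or, true_and]
    exact Iff.rfl
  · simp only [show ((2:Fin 3) = 0) = False by simp, show ((2:Fin 3) = 1) = False by simp,
      false_and, or_false, false_or, true_and]
    have := hc i
    unfold cCell cbarCell at this
    tauto

lemma pinj_syncI : PInj (syncI n) := by
  intro a b c ha hb
  unfold syncI at ha hb
  split_ifs at ha hb <;> simp_all

lemma pinj_offI : PInj (offI n) := by
  intro a b c ha hb
  unfold offI at ha hb
  split_ifs at ha hb <;> simp_all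

lemma pinj_eqz : PInj (eqz n) := by
  intro a b c ha hb
  unfold eqz at ha hb
  split_ifs at ha hb <;> simp_all

lemma pinj_decI : PInj (decI n) := by
  intro a b c ha hb
  unfold decI at ha hb
  split_ifs at ha hb <;>
    simp_all [cCell, cbarCell, Prod.ext_iff]

lemma pinj_rotr : PInj (rotr n) := by
  intro a b c ha hb
  unfold rotr at ha hb
  rw [← hb] at ha
  have := Option.some.inj ha
  rw [Prod.ext_iff] at this
  obtain ⟨h1, h2⟩ := this
  exact Prod.ext h1 (by simpa using sub_left_injective h2)

/-- `ι_sync` step: if total on `confOf p h`, then `p = 0` and it acts as identity. -/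
lemma sync_step {p : Fin n} {h : Fin n → Prop}
    (htot : ∀ q ∈ confOf n p h, (syncI n q).isSome) :
    p = 0 ∧ pApply (confOf n p h) (syncI n) = confOf n p h := by
  have hd : dCell n p ∈ confOf n p h := d_mem_confOf n |>.mpr rfl
  have hp : p = 0 := by
    have := htot _ hd
    unfold syncI dCell at this
    by_contra hne
    simp [hne] at this
  refine ⟨hp, pApply_id ?_⟩
  rintro ⟨a, i⟩ hq
  unfold syncI
  rw [if_neg]
  rintro ⟨ha0, hi0⟩
  rw [mem_confOf] at hq
  rcases hq with ⟨_, rfl⟩ | ⟨ha, _⟩ | ⟨ha, _⟩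
  · exact hi0 hp
  · simp [ha] at ha0
  · simp [ha] at ha0

/-- `ι_off` step: if total on `confOf p h`, then `p ≠ 0` and it acts as identity. -/
lemma off_step {p : Fin n} {h : Fin n → Prop}
    (htot : ∀ q ∈ confOf n p h, (offI n q).isSome) :
    p ≠ 0 ∧ pApply (confOf n p h) (offI n) = confOf n p h := by
  have hd : dCell n p ∈ confOf n p h := d_mem_confOf n |>.mpr rfl
  have hp : p ≠ 0 := by
    intro h0
    have := htot _ hd
    rw [h0] at this
    unfold offI at this
    simp at this
  refine ⟨hp, pApply_id ?_⟩
  rintro ⟨a, i⟩ hq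
  unfold offI dCell
  rw [if_neg]
  rw [Prod.mk.injEq]
  rintro ⟨ha0, rfl⟩
  rw [mem_confOf] at hq
  rcases hq with ⟨_, h0p⟩ | ⟨ha, _⟩ | ⟨ha, _⟩
  · exact hp h0p.symm
  · simp [ha] at ha0
  · simp [ha] at ha0

/-- `ι_{=0}` step: if total on `confOf p h`, then `¬ h 0` and it acts as identity. -/
lemma eqz_step {p : Fin n} {h : Fin n → Prop}
    (htot : ∀ q ∈ confOf n p h, (eqz n q).isSome) :
    ¬ h 0 ∧ pApply (confOf n p h) (eqz n) = confOf n p h := by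
  have hh0 : ¬ h 0 := by
    intro hh
    have hc : cCell n 0 ∈ confOf n p h := c_mem_confOf n |>.mpr hh
    have := htot _ hc
    unfold eqz at this
    simp at this
  refine ⟨hh0, pApply_id ?_⟩
  intro q hq
  unfold eqz
  rw [if_neg]
  rintro rfl
  exact hh0 ((c_mem_confOf n).mp hq)

/-- `ι_dec` step: if total on `confOf p h`, then `h 0` and the bit 0 is cleared. -/
lemma dec_step {p : Fin n} {h : Fin n → Prop}
    (htot : ∀ q ∈ confOf n p h, (decI n q).isSome) :
    h 0 ∧ pApply (confOf n p h) (decI n) = confOf n p (fun i => h i ∧ i ≠ 0) := by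
  have hh0 : h 0 := by
    by_contra hh
    have hc : cbarCell n 0 ∈ confOf n p h := cbar_mem_confOf n |>.mpr hh
    have := htot _ hc
    unfold decI cCell cbarCell at this
    simp at this
  have hsig : pApply (confOf n p h) (decI n) =
      (fun q => if q = cCell n 0 then cbarCell n 0 else q) '' confOf n p h := by
    apply pApply_eq_image
    intro q hq
    unfold decI
    by_cases h1 : q = cCell n 0
    · simp [h1]
    · rw [if_neg h1, if_neg h1, if_neg]
      rintro rfl
      exact (cbar_mem_confOf n |>.mp hq) hh0
  refine ⟨hh0, ?_⟩
  rw [hsig]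
  ext ⟨a, i⟩
  rw [mem_confOf]
  constructor
  · rintro ⟨⟨b, j⟩, hq, heq⟩
    beta_reduce at heq
    rw [mem_confOf] at hq
    by_cases h1 : ((b, j) : Fin 3 × Fin n) = cCell n 0
    · rw [if_pos h1] at heq
      unfold cCell at h1
      unfold cbarCell at heq
      rw [Prod.mk.injEq] at heq h1
      obtain ⟨rfl, rfl⟩ := heq
      refine Or.inr (Or.inr ⟨rfl, ?_⟩)
      rintro ⟨_, hne⟩
      exact hne rfl
    · rw [if_neg h1] at heq
      rw [Prod.mk.injEq] at heq
      obtain ⟨rfl, rfl⟩ := heq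
      rcases hq with ⟨rfl, rfl⟩ | ⟨rfl, hh⟩ | ⟨rfl, hh⟩
      · exact Or.inl ⟨rfl, rfl⟩
      · refine Or.inr (Or.inl ⟨rfl, hh, ?_⟩)
        rintro rfl
        exact h1 rfl
      · exact Or.inr (Or.inr ⟨rfl, fun hhi => hh hhi.1⟩)
  · rintro (⟨rfl, rfl⟩ | ⟨rfl, hh, hne⟩ | ⟨rfl, hh⟩)
    · exact ⟨(0, i), Or.inl ⟨rfl, rfl⟩, by simp [cCell]⟩
    · exact ⟨(1, i), Or.inr (Or.inl ⟨rfl, hh⟩), by simp [cCell, hne]⟩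
    · by_cases hi : i = 0
      · subst hi
        exact ⟨(1, 0), Or.inr (Or.inl ⟨rfl, hh0⟩), by simp [cCell, cbarCell]⟩
      · exact ⟨(2, i), Or.inr (Or.inr ⟨rfl, fun hhi => hh ⟨hhi, hi⟩⟩), by simp [cCell]⟩

/-- `ι_rotr` step: total, rotates the configuration. -/
lemma rotr_step {p : Fin n} {h : Fin n → Prop} :
    pApply (confOf n p h) (rotr n) = confOf n (p - 1) (fun i => h (i + 1)) := by
  have him : pApply (confOf n p h) (rotr n) =
      (fun x : Fin 3 × Fin n => (x.1, x.2 - 1)) '' confOf n p h :=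
    pApply_eq_image _ (fun q _ => rfl)
  rw [him]
  ext ⟨a, i⟩
  constructor
  · rintro ⟨⟨b, j⟩, hq, heq⟩
    beta_reduce at heq
    rw [Prod.mk.injEq] at heq
    obtain ⟨rfl, rfl⟩ := heq
    rw [mem_confOf] at hq
    rw [mem_confOf]
    simpa [sub_add_cancel] using hq
  · intro hq
    refine ⟨(a, i + 1), ?_, by simp⟩
    rw [mem_confOf] at hq ⊢
    rcases hq with ⟨rfl, hip⟩ | ⟨rfl, hh⟩ | ⟨rfl, hh⟩
    · exact Or.inl ⟨rfl, by rw [hip]; ring⟩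
    · exact Or.inr (Or.inl ⟨rfl, hh⟩)
    · exact Or.inr (Or.inr ⟨rfl, hh⟩)

/-- Unified step for `b ∈ {ι_{=0}, ι_dec}`: clears bit 0. -/
lemma b_step {b : PTrans (Fin 3 × Fin n)} (hb : b = eqz n ∨ b = decI n)
    {p : Fin n} {h : Fin n → Prop}
    (htot : ∀ q ∈ confOf n p h, (b q).isSome) :
    pApply (confOf n p h) b = confOf n p (fun i => h i ∧ i ≠ 0) := by
  rcases hb with rfl | rfl
  · obtain ⟨hh0, he⟩ := eqz_step n htot
    rw [he]
    apply confOf_congr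
    intro i
    constructor
    · intro hi
      refine ⟨hi, ?_⟩
      rintro rfl
      exact hh0 hi
    · exact fun hi => hi.1
  · exact (dec_step n htot).2

/-- The loop part of a reset word. -/
def resetWord (bs : List (PTrans (Fin 3 × Fin n))) (b : PTrans (Fin 3 × Fin n)) :
    List (PTrans (Fin 3 × Fin n)) :=
  (bs.map fun x => [x, rotr n, offI n]).flatten ++ [b, rotr n, syncI n]

lemma resetWord_nil {b : PTrans (Fin 3 × Fin n)} :
    resetWord n [] b = [b, rotr n, syncI n] := by simp [resetWord]

lemma resetWord_cons {x b : PTrans (Fin 3 × Fin n)} {bs : List (PTrans (Fin 3 × Fin n))} :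
    resetWord n (x :: bs) b = x :: rotr n :: offI n :: resetWord n bs b := by
  simp [resetWord]

lemma pinj_resetWord {bs : List (PTrans (Fin 3 × Fin n))} {b : PTrans (Fin 3 × Fin n)}
    (hbs : ∀ x ∈ bs, x = eqz n ∨ x = decI n) (hb : b = eqz n ∨ b = decI n) :
    ∀ f ∈ resetWord n bs b, PInj f := by
  intro f hf
  unfold resetWord at hf
  rw [List.mem_append] at hf
  rcases hf with hf | hf
  · rw [List.mem_flatten] at hf
    obtain ⟨l, hl, hfl⟩ := hf
    rw [List.mem_map] at hl
    obtain ⟨x, hx, rfl⟩ := hl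
    simp only [List.mem_cons, List.not_mem_nil, or_false] at hfl
    rcases hfl with h1 | rfl | rfl
    · rcases hbs x hx with h2 | h2
      · rw [h1, h2]; exact pinj_eqz n
      · rw [h1, h2]; exact pinj_decI n
    · exact pinj_rotr n
    · exact pinj_offI n
  · simp only [List.mem_cons, List.not_mem_nil, or_false] at hf
    rcases hf with rfl | rfl | rfl
    · rcases hb with rfl | rfl
      exacts [pinj_eqz n, pinj_decI n]
    · exact pinj_rotr n
    · exact pinj_syncI n

/-- Main loop invariant: applying a cardinality-preserving reset-loop word
starting at `confOf p h` ends in `confOf 0` with the appropriate bits cleared,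
and forces `p = bs.length + 1` in `Fin n`. -/
lemma loop : ∀ (bs : List (PTrans (Fin 3 × Fin n))),
    (∀ x ∈ bs, x = eqz n ∨ x = decI n) →
    ∀ b : PTrans (Fin 3 × Fin n), (b = eqz n ∨ b = decI n) →
    ∀ (p : Fin n) (h : Fin n → Prop),
    (wordApply (confOf n p h) (resetWord n bs b)).ncard = (confOf n p h).ncard →
    wordApply (confOf n p h) (resetWord n bs b) =
      confOf n 0 (fun i =>
        (¬ ∃ m : ℕ, 1 ≤ m ∧ m ≤ bs.length + 1 ∧ i = -(m : Fin n)) ∧ h (i + p))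
    ∧ p = ((bs.length + 1 : ℕ) : Fin n) := by
  haveI : Inhabited (Fin n) := ⟨0⟩
  intro bs
  induction bs with
  | nil =>
    intro _ b hb p h hcard
    rw [resetWord_nil] at hcard ⊢
    have hpb : PInj b := by rcases hb with rfl | rfl; exacts [pinj_eqz n, pinj_decI n]
    have hp2 : ∀ f ∈ [rotr n, syncI n], PInj f := by
      intro f hf
      simp only [List.mem_cons, List.not_mem_nil, or_false] at hf
      rcases hf with rfl | rfl
      exacts [pinj_rotr n, pinj_syncI n]
    obtain ⟨htot1, hcard1⟩ := peel hp2 hpb hcard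
    have e1 := b_step n hb htot1
    rw [e1] at hcard1
    have hp3 : ∀ f ∈ [syncI n], PInj f := by
      intro f hf
      simp only [List.mem_cons, List.not_mem_nil, or_false] at hf
      rcases hf with rfl
      exact pinj_syncI n
    obtain ⟨htot2, hcard2⟩ := peel hp3 (pinj_rotr n) hcard1
    have e2 := rotr_step n (p := p) (h := fun i => h i ∧ i ≠ 0)
    rw [e2] at hcard2
    have hp4 : ∀ f ∈ ([] : List (PTrans (Fin 3 × Fin n))), PInj f := by
      intro f hf; simp at hf
    obtain ⟨htot3, _⟩ := peel hp4 (pinj_syncI n) hcard2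
    obtain ⟨hp0, e3⟩ := sync_step n htot3
    have hp1 : p = 1 := sub_eq_zero.mp hp0
    constructor
    · rw [wordApply_cons, e1, wordApply_cons, e2, wordApply_cons, wordApply_nil, e3, hp0]
      apply confOf_congr
      intro i
      beta_reduce
      have hex : (∃ m : ℕ, 1 ≤ m ∧ m ≤ List.length ([] : List (PTrans (Fin 3 × Fin n))) + 1 ∧ i = -(m : Fin n)) ↔ i = -1 := by
        constructor
        · rintro ⟨m, hm1, hm2, rfl⟩
          have : m = 1 := by simpa using le_antisymm hm2 hm1
          subst this
          rw [Nat.cast_one]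
        · intro hi
          exact ⟨1, le_refl 1, by simp, by rw [Nat.cast_one]; exact hi⟩
      have hne : i + 1 = 0 ↔ i = -1 := add_eq_zero_iff_eq_neg
      rw [hex, hp1]
      constructor
      · rintro ⟨hh, hn0⟩
        exact ⟨fun hc => hn0 (hne.mpr hc), hh⟩
      · rintro ⟨hn1, hh⟩
        exact ⟨hh, fun hc => hn1 (hne.mp hc)⟩
    · simpa using hp1
  | cons x bs ih =>
    intro hbs b hb p h hcard
    rw [resetWord_cons] at hcard ⊢
    have hbs' : ∀ y ∈ bs, y = eqz n ∨ y = decI n :=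
      fun y hy => hbs y (List.mem_cons_of_mem x hy)
    have hpx : PInj x := by
      rcases hbs x (List.mem_cons_self) with rfl | rfl
      exacts [pinj_eqz n, pinj_decI n]
    have hprw : ∀ f ∈ resetWord n bs b, PInj f := pinj_resetWord n hbs' hb
    have hp1l : ∀ f ∈ rotr n :: offI n :: resetWord n bs b, PInj f := by
      intro f hf
      rcases List.mem_cons.mp hf with rfl | hf
      · exact pinj_rotr n
      rcases List.mem_cons.mp hf with rfl | hf
      · exact pinj_offI n
      exact hprw f hf
    have hp2l : ∀ f ∈ offI n :: resetWord n bs b, PInj f := by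
      intro f hf
      rcases List.mem_cons.mp hf with rfl | hf
      · exact pinj_offI n
      exact hprw f hf
    obtain ⟨htot1, hcard1⟩ := peel hp1l hpx hcard
    have e1 := b_step n (hbs x (List.mem_cons_self)) htot1
    rw [e1] at hcard1
    obtain ⟨htot2, hcard2⟩ := peel hp2l (pinj_rotr n) hcard1
    have e2 := rotr_step n (p := p) (h := fun i => h i ∧ i ≠ 0)
    rw [e2] at hcard2
    obtain ⟨htot3, hcard3⟩ := peel hprw (pinj_offI n) hcard2
    obtain ⟨-, e3⟩ := off_step n htot3
    rw [e3] at hcard3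
    obtain ⟨hres, hpeq⟩ :=
      ih hbs' b hb (p - 1) (fun i => h (i + 1) ∧ i + 1 ≠ 0) hcard3
    have hp : p = ((bs.length + 1 + 1 : ℕ) : Fin n) := by
      rw [eq_add_of_sub_eq hpeq]
      push_cast
      ring
    constructor
    · rw [wordApply_cons, e1, wordApply_cons, e2, wordApply_cons, e3, hres]
      apply confOf_congr
      intro i
      beta_reduce
      have earr : i + (p - 1) + 1 = i + p := by ring
      rw [earr]
      have hC : i + p = 0 ↔ i = -((bs.length + 1 + 1 : ℕ) : Fin n) := by
        rw [add_eq_zero_iff_eq_neg, hp]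
      have hB : (∃ m : ℕ, 1 ≤ m ∧ m ≤ (x :: bs).length + 1 ∧ i = -(m : Fin n)) ↔
          ((∃ m : ℕ, 1 ≤ m ∧ m ≤ bs.length + 1 ∧ i = -(m : Fin n)) ∨
            i = -((bs.length + 1 + 1 : ℕ) : Fin n)) := by
        simp only [List.length_cons]
        constructor
        · rintro ⟨m, hm1, hm2, hmi⟩
          by_cases hm : m ≤ bs.length + 1
          · exact Or.inl ⟨m, hm1, hm, hmi⟩
          · have : m = bs.length + 1 + 1 := by omega
            subst this
            exact Or.inr hmi
        · rintro (⟨m, hm1, hm2, hmi⟩ | hmi)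
          · exact ⟨m, hm1, by omega, hmi⟩
          · exact ⟨bs.length + 1 + 1, by omega, le_refl _, hmi⟩
      constructor
      · rintro ⟨hA, hh, hne⟩
        refine ⟨?_, hh⟩
        intro hBmem
        rcases hB.mp hBmem with hA' | hc
        · exact hA hA'
        · exact hne (hC.mpr hc)
      · rintro ⟨hnB, hh⟩
        exact ⟨fun hA' => hnB (hB.mpr (Or.inl hA')), hh,
          fun hz => hnB (hB.mpr (Or.inr (hC.mp hz)))⟩
    · simpa using hp

/-- Applying a cardinality-preserving word of `L_reset` to a
valid configuration of an `n`-bit binary counter synchronizes the counter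
(`d₀` belongs to the resulting configuration) and sets its value to zero. -/
theorem counter_reset
    (R : Set (Fin 3 × Fin n)) (hR : ValidConf n R)
    (u : List (PTrans (Fin 3 × Fin n))) (hu : memLreset n u)
    (hcard : (wordApply R u).ncard = R.ncard) :
    dCell n 0 ∈ wordApply R u ∧ counterValue n (wordApply R u) = 0 := by
  haveI : Inhabited (Fin n) := ⟨0⟩
  obtain ⟨bs, b, hbs, hb, rfl⟩ := hu
  have hword : syncI n ::
      ((bs.map fun x => [x, rotr n, offI n]).flatten ++ [b, rotr n, syncI n]) =
      syncI n :: resetWord n bs b := rfl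
  rw [hword] at hcard ⊢
  obtain ⟨p, hRe⟩ := valid_eq_confOf n hR
  set g : Fin n → Prop := fun i => cCell n i ∈ R with hg
  rw [hRe] at hcard ⊢
  obtain ⟨htot0, hcard0⟩ := peel (pinj_resetWord n hbs hb) (pinj_syncI n) hcard
  obtain ⟨hp0, e0⟩ := sync_step n htot0
  rw [e0] at hcard0
  obtain ⟨hres, hpeq⟩ := loop n bs hbs b hb p g hcard0
  have hfin : wordApply (confOf n p g) (syncI n :: resetWord n bs b) =
      confOf n 0 (fun i =>
        (¬ ∃ m : ℕ, 1 ≤ m ∧ m ≤ bs.length + 1 ∧ i = -(m : Fin n)) ∧ g (i + p)) := by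
    rw [wordApply_cons, e0, hres]
  have hdvd : n ∣ bs.length + 1 := by
    have : ((bs.length + 1 : ℕ) : Fin n) = 0 := by rw [← hpeq, hp0]
    exact (Fin.natCast_eq_zero).mp this
  have hnle : n ≤ bs.length + 1 := Nat.le_of_dvd (by omega) hdvd
  have hall : ∀ i : Fin n,
      ¬ ((¬ ∃ m : ℕ, 1 ≤ m ∧ m ≤ bs.length + 1 ∧ i = -(m : Fin n)) ∧ g (i + p)) := by
    intro i hi
    apply hi.1
    refine ⟨n - i.val, by omega, by omega, ?_⟩
    have h1 : ((n - i.val : ℕ) : Fin n) + i = 0 := by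
      have h2 : ((n - i.val : ℕ) : Fin n) + ((i.val : ℕ) : Fin n) =
          ((n - i.val + i.val : ℕ) : Fin n) := by push_cast; ring
      rw [Fin.cast_val_eq_self] at h2
      rw [h2, Nat.sub_add_cancel (le_of_lt i.isLt), Fin.natCast_self]
    exact eq_neg_of_add_eq_zero_right h1
  rw [hfin]
  constructor
  · exact (d_mem_confOf n).mpr rfl
  · unfold counterValue
    apply Finset.sum_eq_zero
    intro i _
    rw [if_neg]
    intro hmem
    exact hall i ((c_mem_confOf n).mp hmem)
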